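/- Let L_{p,q} be the GNS Hilbert space of (H_{p,q}, ε_q) and K_{p,f} the GNS space of (H_{p,s(f)}, ε_{s(f)} ∘ E_f^s), for a graph of amenable discrete quantum groups. For any path w = (e₁,…,eₙ) from p to q and any elementary tensor a = â₀ ⊗ ⋯ ⊗ aₙ ∈ H_w, one has ‖η_{p,q}(a)‖²_{L_{p,q}} = |ε_q(aₙ)|² · ‖η_{p,eₙ}(â₀ ⊗ ⋯ ⊗ a_{n-1})‖²_{K_{p,eₙ}} = |ε_q(aₙ)|² · ‖η_{p,ēₙ}(â₀ ⊗ ⋯ ⊗ â_{n-1} ⊗ 1)‖²_{K_{p,ēₙ}}. -/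

import Mathlib

/-! ## Graphs in the sense of Serre, paths, and words with coefficients -/

structure SerreGraph where
  V : Type
  E : Type
  src : E → V
  bar : E → E
  bar_bar : ∀ e, bar (bar e) = e
  bar_ne : ∀ e, bar e ≠ e

namespace SerreGraph
variable (G : SerreGraph)

/-- The range (target) of an edge. -/
def rng (e : G.E) : G.V := G.src (G.bar e)

/-- Paths from `p` to `q`. -/
inductive Path : G.V → G.V → Type
  | nil (p : G.V) : Path p p
  | cons (e : G.E) {q : G.V} (w : Path (G.src (G.bar e)) q) : Path (G.src e) q

namespace Path
variable {G}

def toList : ∀ {p q : G.V}, G.Path p q → List G.E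
  | _, _, .nil _ => []
  | _, _, .cons e w => e :: toList w

/-- geodesic = no backtracking -/
def Geodesic {p q : G.V} (w : G.Path p q) : Prop :=
  (toList w).Chain' fun e f => f ≠ G.bar e

end Path

def Connected : Prop := ∀ p q : G.V, Nonempty (G.Path p q)

/-- `T` is a maximal subtree: edge set closed under reversal such that any two
vertices are joined by a unique geodesic path with edges in `T`. -/
structure IsMaximalSubtree (T : Set G.E) : Prop where
  bar_mem : ∀ e ∈ T, G.bar e ∈ T
  geodesic : ∀ p q : G.V, ∃! w : G.Path p q,
    (∀ e ∈ w.toList, e ∈ T) ∧ w.Geodesic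

/-- A word `a₀ u_{e₁} a₁ ⋯ u_{eₙ} aₙ` from `p` to `q`: a path together with a
coefficient in the vertex algebra at the source of each edge and a final
coefficient at `q`. -/
inductive Word (A : G.V → Type) : G.V → G.V → Type
  | nil {p : G.V} (a : A p) : Word A p p
  | cons (e : G.E) (a : A (G.src e)) {q : G.V}
      (w : Word A (G.src (G.bar e)) q) : Word A (G.src e) q

/-- A pair of words over the same underlying path. -/
inductive PairWord (A : G.V → Type) : G.V → G.V → Type
  | nil {p : G.V} (a b : A p) : PairWord A p p
  | cons (e : G.E) (a b : A (G.src e)) {q : G.V}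
      (w : PairWord A (G.src (G.bar e)) q) : PairWord A (G.src e) q

namespace Word
variable {G}
variable {A : G.V → Type}

/-- the underlying path of a word -/
def path : ∀ {p q : G.V}, G.Word A p q → G.Path p q
  | _, _, .nil _ => .nil _
  | _, _, .cons e _ w => .cons e (path w)

def startsWith : ∀ {p q : G.V}, G.Word A p q → G.E → Prop
  | _, _, .nil _, _ => False
  | _, _, .cons f _ _, e => f = e

variable [∀ v, Ring (A v)] [∀ v, StarRing (A v)]

/-- multiply the first coefficient on the left -/
def headMul : ∀ {p q : G.V}, G.Word A p q → A p → G.Word A p q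
  | _, _, .nil a, x => .nil (x * a)
  | _, _, .cons e a w, x => .cons e (x * a) w

/-- multiply the last coefficient on the right -/
def lastMul : ∀ {p q : G.V}, G.Word A p q → A q → G.Word A p q
  | _, _, .nil a, x => .nil (a * x)
  | _, _, .cons e a w, x => .cons e a (lastMul w x)

/-- the word over a given path with all coefficients `1` -/
def ones : ∀ {p q : G.V}, G.Path p q → G.Word A p q
  | _, _, .nil p => .nil (1 : A p)
  | _, _, .cons e w => .cons e 1 (ones w)

/-- `Reduced Epred prev w` : the word is reduced; `Epred e a` expresses
`E_e^s(a) = 0`. -/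
def Reduced (Epred : ∀ e : G.E, A (G.src e) → Prop) :
    ∀ {p q : G.V}, Option G.E → G.Word A p q → Prop
  | _, _, _, .nil _ => True
  | _, _, prev, .cons e a w =>
      ((prev = some (G.bar e)) → Epred e a) ∧ Reduced Epred (some e) w

end Word

namespace PairWord
variable {G}
variable {A : G.V → Type}

def fst : ∀ {p q : G.V}, G.PairWord A p q → G.Word A p q
  | _, _, .nil a _ => .nil a
  | _, _, .cons e a _ w => .cons e a (fst w)

def snd : ∀ {p q : G.V}, G.PairWord A p q → G.Word A p q
  | _, _, .nil _ b => .nil b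
  | _, _, .cons e _ b w => .cons e b (snd w)

variable [∀ v, Ring (A v)] [∀ v, StarRing (A v)]

/-- The recursion `x₀ = a₀* x b₀`, `x_k = a_k* T_{e_k}(x_{k-1}) b_k` of
Lemma 3.10, with accumulator `x`. -/
def xval (T : ∀ e : G.E, A (G.src e) → A (G.src (G.bar e))) :
    ∀ {p q : G.V}, G.PairWord A p q → A p → A q
  | _, _, .nil a b, x => star a * x * b
  | _, _, .cons e a b w, x => xval T w (T e (star a * x * b))

end PairWord
end SerreGraph

/-- The element `ι(a₀) u_{e₁} ι(a₁) ⋯ u_{eₙ} ι(aₙ)` of a ring `P`. -/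
def SerreGraph.Word.elt {G : SerreGraph} {A : G.V → Type} {P : Type} [Ring P]
    (ι : ∀ q, A q → P) (u : G.E → P) :
    ∀ {p q : G.V}, G.Word A p q → P
  | _, _, .nil (p := p) a => ι p a
  | _, _, .cons e a w => ι (G.src e) a * u e * elt ι u w

namespace SerreGraph

variable {G : SerreGraph} {A : G.V → Type}

/-- append an edge `e` (with `s(e) = q`) and a final coefficient to a word -/
def Word.snoc : ∀ {p q : G.V}, G.Word A p q → (e : G.E) → G.src e = q →
    A (G.src (G.bar e)) → G.Word A p (G.src (G.bar e))
  | _, _, .nil a, e, h, b => by subst h; exact .cons e a (.nil b)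
  | _, _, .cons f a w, e, h, b => .cons f a (w.snoc e h b)

/-- the diagonal pair of words -/
def Word.toPair : ∀ {p q : G.V}, G.Word A p q → G.PairWord A p q
  | _, _, .nil a => .nil a a
  | _, _, .cons e a w => .cons e a a (toPair w)

section Aux
variable {G : SerreGraph} {A : G.V → Type} [∀ v, Ring (A v)] [∀ v, StarRing (A v)]

theorem Word.toPair_fst : ∀ {p q : G.V} (w : G.Word A p q), w.toPair.fst = w
  | _, _, .nil _ => rfl
  | _, _, .cons e a w => by
      simp only [Word.toPair, PairWord.fst, toPair_fst w]

theorem Word.toPair_snd : ∀ {p q : G.V} (w : G.Word A p q), w.toPair.snd = w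
  | _, _, .nil _ => rfl
  | _, _, .cons e a w => by
      simp only [Word.toPair, PairWord.snd, toPair_snd w]

theorem Word.xval_snoc (T : ∀ e : G.E, A (G.src e) → A (G.src (G.bar e)))
    (e : G.E) :
    ∀ {r : G.V} (w : G.Word A r (G.src e)) (b : A (G.src (G.bar e))) (x : A r),
      ((w.snoc e rfl b).toPair).xval T x
        = star b * T e ((w.toPair).xval T x) * b
  | _, .nil a, b, x => rfl
  | _, .cons f c w, b, x => xval_snoc T e w b (T f (star c * x * c))

end Aux

end SerreGraph

open SerreGraph

/-- (Lemma 5.2)  With `L_{p,q}` the GNS space of `(H_{p,q}, ε_q)`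
and `K_{p,f}` the GNS space of `(H_{p,s(f)}, ε_{s(f)} ∘ E_f^s)`, for any path
`w = (e₁,…,eₙ)` from `p` to `q` and any elementary tensor `a = â₀ ⊗ ⋯ ⊗ aₙ ∈ H_w`:
`‖η_{p,q}(a)‖² = |ε_q(aₙ)|² ‖η_{p,eₙ}(â₀⊗⋯⊗a_{n-1})‖²
             = |ε_q(aₙ)|² ‖η_{p,ēₙ}(â₀⊗⋯⊗â_{n-1}⊗1)‖²`. -/
theorem stmt14 (G : SerreGraph)
    (A : G.V → Type) [∀ q, CStarAlgebra (A q)]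
    (B : G.E → Type) [∀ e, CStarAlgebra (B e)]
    (σ : ∀ e, B e ≃⋆ₐ[ℂ] B (G.bar e))
    (s : ∀ e, B e →⋆ₐ[ℂ] A (G.src e)) (hs : ∀ e, Function.Injective (s e))
    (E : ∀ e, A (G.src e) →ₗ[ℂ] A (G.src e))
    (hE_range : ∀ e a, ∃ b, E e a = s e b)
    (hE_fix : ∀ e (b : B e), E e (s e b) = s e b)
    (hE_bimod : ∀ e (b b' : B e) (a : A (G.src e)),
      E e (s e b * a * s e b') = s e b * E e a * s e b')
    (T : ∀ e, A (G.src e) → A (G.src (G.bar e)))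
    (hT : ∀ e a (b : B e), E e a = s e b → T e a = s (G.bar e) (σ e b))
    -- amenability: the counit characters, compatible with the edge embeddings
    (ε : ∀ q, A q →⋆ₐ[ℂ] ℂ)
    (hε : ∀ e (b : B e), ε (G.src e) (s e b) = ε (G.src (G.bar e)) (s (G.bar e) (σ e b)))
    -- the base vertex
    (p : G.V)
    -- the GNS spaces `L_{p,q}` of `(H_{p,q}, ε_q)`
    (L : G.V → Type) [∀ q, NormedAddCommGroup (L q)]
    [∀ q, InnerProductSpace ℂ (L q)] [∀ q, CompleteSpace (L q)]
    (ηL : ∀ {q : G.V}, G.Word A p q → L q)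
    (hL : ∀ q (pw : G.PairWord A p q),
      (inner ℂ (ηL pw.fst) (ηL pw.snd) : ℂ) = ε q (pw.xval T 1))
    (hLorth : ∀ q (wa wb : G.Word A p q), wa.path ≠ wb.path →
      (inner ℂ (ηL wa) (ηL wb) : ℂ) = 0)
    -- the GNS spaces `K_{p,f}` of `(H_{p,s(f)}, ε_{s(f)} ∘ E_f^s)`
    (K : G.E → Type) [∀ f, NormedAddCommGroup (K f)]
    [∀ f, InnerProductSpace ℂ (K f)] [∀ f, CompleteSpace (K f)]
    (ηK : ∀ f : G.E, G.Word A p (G.src f) → K f)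
    (hK : ∀ f (pw : G.PairWord A p (G.src f)),
      (inner ℂ (ηK f pw.fst) (ηK f pw.snd) : ℂ) = ε (G.src f) (E f (pw.xval T 1)))
    (hKorth : ∀ f (wa wb : G.Word A p (G.src f)), wa.path ≠ wb.path →
      (inner ℂ (ηK f wa) (ηK f wb) : ℂ) = 0) :
    ∀ (q' : G.V) (w' : G.Word A p q') (e : G.E) (h : G.src e = q')
      (a : A (G.src (G.bar e))),
      ‖ηL (w'.snoc e h a)‖ ^ 2
          = ‖ε (G.src (G.bar e)) a‖ ^ 2 *
            ‖ηK e (cast (congrArg (G.Word A p) h.symm) w')‖ ^ 2 ∧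
      ‖ηL (w'.snoc e h a)‖ ^ 2
          = ‖ε (G.src (G.bar e)) a‖ ^ 2 *
            ‖ηK (G.bar e) (w'.snoc e h 1)‖ ^ 2 := by
  intro q' w' e h a
  subst h
  set X := (w'.toPair).xval T (1 : A p) with hX
  obtain ⟨b, hb⟩ := hE_range e X
  have hTX : T e X = s (G.bar e) (σ e b) := hT e X b hb
  set z : ℂ := ε (G.src (G.bar e)) (s (G.bar e) (σ e b)) with hz
  set c : ℂ := ε (G.src (G.bar e)) a with hc
  have habs : star c * z * c = ((‖c‖ ^ 2 : ℝ) : ℂ) * z := by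
    have hcc : (c * star c : ℂ) = ((‖c‖ ^ 2 : ℝ) : ℂ) := by
      rw [Complex.star_def, Complex.mul_conj, Complex.normSq_eq_norm_sq]
    calc star c * z * c = (c * star c) * z := by ring
      _ = ((‖c‖ ^ 2 : ℝ) : ℂ) * z := by rw [hcc]
  -- L inner product
  have h1 : (inner ℂ (ηL (w'.snoc e rfl a)) (ηL (w'.snoc e rfl a)) : ℂ)
      = ((‖c‖ ^ 2 : ℝ) : ℂ) * z := by
    have h0 := hL _ ((w'.snoc e rfl a).toPair)
    rw [Word.toPair_fst, Word.toPair_snd] at h0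
    rw [h0, Word.xval_snoc T e w' a 1, ← hX, hTX, map_mul, map_mul, map_star,
      ← hz, ← hc, habs]
  -- K e inner product
  have h2 : (inner ℂ (ηK e w') (ηK e w') : ℂ) = z := by
    have h0 := hK e (w'.toPair)
    rw [Word.toPair_fst, Word.toPair_snd] at h0
    rw [h0, ← hX, hb, hz, hε e b]
  -- K (bar e) inner product
  have h3 : (inner ℂ (ηK (G.bar e) (w'.snoc e rfl 1)) (ηK (G.bar e) (w'.snoc e rfl 1)) : ℂ)
      = z := by
    have h0 := hK (G.bar e) ((w'.snoc e rfl 1).toPair)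
    rw [Word.toPair_fst, Word.toPair_snd] at h0
    rw [h0, Word.xval_snoc T e w' 1 1, ← hX, star_one, one_mul, mul_one, hTX,
      hE_fix, hz]
  constructor
  · show ‖ηL (w'.snoc e rfl a)‖ ^ 2 = ‖c‖ ^ 2 * ‖ηK e w'‖ ^ 2
    rw [← inner_self_eq_norm_sq (𝕜 := ℂ), ← inner_self_eq_norm_sq (𝕜 := ℂ) (x := ηK e w'), h1, h2,
      RCLike.re_to_complex, RCLike.re_to_complex, Complex.re_ofReal_mul]
  · show ‖ηL (w'.snoc e rfl a)‖ ^ 2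
        = ‖c‖ ^ 2 * ‖ηK (G.bar e) (w'.snoc e rfl 1)‖ ^ 2
    rw [← inner_self_eq_norm_sq (𝕜 := ℂ), ← inner_self_eq_norm_sq (𝕜 := ℂ) (x := ηK (G.bar e) (w'.snoc e rfl 1)), h1, h3,
      RCLike.re_to_complex, RCLike.re_to_complex, Complex.re_ofReal_mul]
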